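/- Let D be a Dirichlet–Ferguson process with parameter α on (A,𝒜) and X the associated Pólya sequence. For h : A → ℝ with E[h(X_1)²] < ∞, set V(h) = ∫_A h² dD − (∫_A h dD)². Then the Bayes estimator of V(h) under squared loss given no observations is E[V(h)] = (α(A)/(α(A)+1)) · Var[h(X_1)]. -/

import Mathlib

open MeasureTheory

/-- The joint law of the first `n` instants of a Pólya sequence with parameter `α`. -/
noncomputable def polyaMeasure {A : Type*} [MeasurableSpace A] (α : Measure A) :
    (n : ℕ) → Measure (Fin n → A)
  | 0 => Measure.dirac (fun i => i.elim0)
  | (n + 1) =>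
      (polyaMeasure α n).bind (fun a =>
        ((α Set.univ + n)⁻¹ •
            (α + ∑ i : Fin n, Measure.dirac (a i))).map (Fin.snoc a))

open scoped ENNReal

lemma snoc0 {A : Type*} :
    (Fin.snoc (α := fun _ : Fin (0 + 1) => A) (fun i : Fin 0 => i.elim0)) =
      fun x (_ : Fin (0 + 1)) => x := by
  funext x i
  have : i = Fin.last 0 := Fin.ext (by omega)
  rw [this, Fin.snoc_last]

lemma snoc1 {A : Type*} (x : A) :
    (Fin.snoc (α := fun _ : Fin 2 => A) (fun _ : Fin 1 => x)) = fun y => ![x, y] := by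
  funext y i
  fin_cases i <;> simp [Fin.snoc]

lemma polyaMeasure_one {A : Type*} [MeasurableSpace A] (α : Measure A) :
    polyaMeasure α 1 = ((α Set.univ)⁻¹ • α).map (fun x (_ : Fin 1) => x) := by
  rw [show (1 : ℕ) = 0 + 1 from rfl, polyaMeasure, polyaMeasure,
    Measure.dirac_bind (Subsingleton.measurable (α := Fin 0 → A))]
  rw [snoc0]
  simp

section Two
variable {A : Type*} [MeasurableSpace A] (α : Measure A) [IsFiniteMeasure α]

lemma mvec : Measurable (fun p : A × A => ![p.1, p.2]) := by
  apply measurable_pi_iff.2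
  intro i; fin_cases i <;> simp <;> [exact measurable_fst; exact measurable_snd]

lemma mdiag : Measurable (fun x : A => ![x, x]) := by
  apply measurable_pi_iff.2
  intro i; fin_cases i <;> simp <;> exact measurable_id

lemma msnocpair : Measurable (fun q : (Fin 1 → A) × A => (Fin.snoc q.1 q.2 : Fin 2 → A)) := by
  apply measurable_pi_iff.2
  intro i; fin_cases i
  · simpa [Fin.snoc, Function.comp_def] using (measurable_pi_apply 0).comp measurable_fst
  · simpa [Fin.snoc] using measurable_snd

lemma msnoc (a : Fin 1 → A) : Measurable (fun y : A => (Fin.snoc a y : Fin 2 → A)) :=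
  msnocpair.comp (measurable_const.prodMk measurable_id)

lemma mK : Measurable (fun a : Fin 1 → A =>
    (((α Set.univ + (1 : ℕ))⁻¹ •
      (α + ∑ i : Fin 1, Measure.dirac (a i))).map (Fin.snoc a) : Measure (Fin 2 → A))) := by
  refine Measure.measurable_of_measurable_coe _ fun t ht => ?_
  have key : ∀ a : Fin 1 → A,
      ((((α Set.univ + (1 : ℕ))⁻¹ •
        (α + ∑ i : Fin 1, Measure.dirac (a i))).map (Fin.snoc a) : Measure (Fin 2 → A))) t =
      (α Set.univ + 1)⁻¹ *
        (α (Prod.mk a ⁻¹' ((fun q : (Fin 1 → A) × A => (Fin.snoc q.1 q.2 : Fin 2 → A)) ⁻¹' t))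
          + t.indicator 1 (Fin.snoc a (a 0))) := by
    intro a
    rw [Measure.map_apply (msnoc a) ht, Measure.smul_apply, Fin.sum_univ_one,
      Measure.add_apply, Measure.dirac_apply' _ (msnoc a ht)]
    have hind : ((fun y : A => (Fin.snoc a y : Fin 2 → A)) ⁻¹' t).indicator
        (1 : A → ℝ≥0∞) (a 0) = t.indicator 1 (Fin.snoc a (a 0)) := by
      by_cases hx : (Fin.snoc a (a 0) : Fin 2 → A) ∈ t <;> simp [hx]
    rw [hind]
    simp only [smul_eq_mul, Nat.cast_one]
    rfl
  simp only [key]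
  apply Measurable.const_mul
  apply Measurable.add
  · exact measurable_measure_prodMk_left (msnocpair ht)
  · exact (measurable_one.indicator ht).comp
      (msnocpair.comp (measurable_id.prodMk (measurable_pi_apply 0)))

lemma polyaMeasure_two :
    polyaMeasure α 2 = (α Set.univ + 1)⁻¹ •
      ((((α Set.univ)⁻¹ • α).prod α).map (fun p : A × A => ![p.1, p.2]) +
        ((α Set.univ)⁻¹ • α).map (fun x => ![x, x])) := by
  set c : ℝ≥0∞ := (α Set.univ + 1)⁻¹ with hc
  have hcne : c ≠ ⊤ := ENNReal.inv_ne_top.2 (by simp)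
  set ν : Measure A := (α Set.univ)⁻¹ • α with hν
  have hunfold : polyaMeasure α 2 = (polyaMeasure α 1).bind (fun a =>
      ((α Set.univ + (1 : ℕ))⁻¹ •
        (α + ∑ i : Fin 1, Measure.dirac (a i))).map (Fin.snoc a)) := rfl
  rw [hunfold]
  ext s hs
  rw [Measure.bind_apply hs (mK α).aemeasurable, polyaMeasure_one α,
    lintegral_map (show Measurable fun a : Fin 1 → A =>
        ((((α Set.univ + (1 : ℕ))⁻¹ •
          (α + ∑ i : Fin 1, Measure.dirac (a i))).map (Fin.snoc a) : Measure (Fin 2 → A))) s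
        from (Measure.measurable_coe hs).comp (mK α))
      (measurable_pi_lambda (fun (x : A) (_ : Fin 1) => x) fun _ => measurable_id)]
  have key : ∀ x : A,
      ((((α Set.univ + (1 : ℕ))⁻¹ •
        (α + ∑ i : Fin 1, Measure.dirac ((fun _ : Fin 1 => x) i))).map
          (Fin.snoc (fun _ : Fin 1 => x)) : Measure (Fin 2 → A))) s =
      c * (α (Prod.mk x ⁻¹' ((fun p : A × A => ![p.1, p.2]) ⁻¹' s))
            + ((fun x : A => ![x, x]) ⁻¹' s).indicator 1 x) := by
    intro x
    have hm : Measurable (fun y : A => ![x, y]) :=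
      mvec.comp (measurable_const.prodMk measurable_id)
    rw [snoc1, Fin.sum_univ_one, Measure.map_apply hm hs,
      Measure.smul_apply, Measure.add_apply, Measure.dirac_apply' _ (hm hs)]
    have hind : ((fun y : A => ![x, y]) ⁻¹' s).indicator (1 : A → ℝ≥0∞) x =
        ((fun x : A => ![x, x]) ⁻¹' s).indicator 1 x := by
      by_cases hx : (![x, x] : Fin 2 → A) ∈ s <;> simp [hx]
    rw [hind]
    simp only [smul_eq_mul, Nat.cast_one, ← hc]
    rfl
  simp only [key]
  rw [lintegral_const_mul' _ _ hcne,
    lintegral_add_left (measurable_measure_prodMk_left (mvec hs)),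
    lintegral_indicator_one (mdiag hs)]
  rw [show ((c • ((ν.prod α).map (fun p : A × A => ![p.1, p.2]) + ν.map (fun x => ![x, x]))) s)
      = c * (((ν.prod α).map (fun p : A × A => ![p.1, p.2])) s + (ν.map (fun x => ![x, x])) s)
    from by simp [Measure.smul_apply, Measure.add_apply, mul_add],
    Measure.map_apply mvec hs, Measure.map_apply mdiag hs, Measure.prod_apply (mvec hs)]
end Two

lemma integrable_mul_of_memL2 {Ω : Type*} [MeasurableSpace Ω] {P : Measure Ω}
    {f g : Ω → ℝ} (hf : MemLp f 2 P) (hg : MemLp g 2 P) :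
    Integrable (fun ω => f ω * g ω) P := by
  refine ((hf.integrable_sq.add hg.integrable_sq).div_const 2).mono'
    (hf.aestronglyMeasurable.mul hg.aestronglyMeasurable)
    (Filter.Eventually.of_forall fun ω => ?_)
  rw [Real.norm_eq_abs]
  simp only [Pi.add_apply]
  nlinarith [sq_nonneg (|f ω| - |g ω|), sq_abs (f ω), sq_abs (g ω),
    abs_mul (f ω) (g ω), abs_nonneg (f ω), abs_nonneg (g ω)]


/-- Bayes estimator of the conditional variance with no observations: for a
Dirichlet–Ferguson process `D` with parameter `α` directing the Pólya sequence `X`,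
and `V(h) = ∫ h² dD − (∫ h dD)²`, one has
`E[V(h)] = (α(A)/(α(A)+1)) · Var[h(X₁)]`. -/
theorem bayes_estimator_conditional_variance_no_observations
    {A Ω : Type*} [MeasurableSpace A] [MeasurableSpace Ω]
    (α : Measure A) [IsFiniteMeasure α] (hα : α ≠ 0) (θ : ℝ)
    (hθ : θ = (α Set.univ).toReal)
    (P : Measure Ω) [IsProbabilityMeasure P]
    (X : ℕ → Ω → A) (hXmeas : ∀ i, Measurable (X i))
    (hX : ∀ m : ℕ, Measure.map (fun ω (i : Fin m) => X (i + 1) ω) P = polyaMeasure α m)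
    (D : Ω → Measure A) (hDprob : ∀ ω, IsProbabilityMeasure (D ω))
    (hDmeas : ∀ C : Set A, MeasurableSet C → Measurable fun ω => D ω C)
    -- D is the directing (de Finetti) measure of X:
    (hdir : ∀ (m : ℕ) (f : (Fin m → A) → ℝ), Measurable f →
      Integrable (fun ω => f (fun i => X (i + 1) ω)) P →
      Integrable (fun ω => ∫ a, f a ∂(Measure.pi fun _ : Fin m => D ω)) P →
      ∫ ω, (∫ a, f a ∂(Measure.pi fun _ : Fin m => D ω)) ∂P =
        ∫ ω, f (fun i => X (i + 1) ω) ∂P)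
    (h : A → ℝ) (hhm : Measurable h)
    (hh2 : MemLp (fun ω => h (X 1 ω)) 2 P)
    (hint1 : Integrable (fun ω => ∫ a, (h a) ^ 2 ∂(D ω)) P)
    (hint2 : Integrable (fun ω => (∫ a, h a ∂(D ω)) ^ 2) P) :
    ∫ ω, ((∫ a, (h a) ^ 2 ∂(D ω)) - (∫ a, h a ∂(D ω)) ^ 2) ∂P =
      θ / (θ + 1) *
        ((∫ ω, (h (X 1 ω)) ^ 2 ∂P) - (∫ ω, h (X 1 ω) ∂P) ^ 2) := by
  have hθ0 : α Set.univ ≠ 0 := Measure.measure_univ_ne_zero.2 hα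
  have hθtop : α Set.univ ≠ ⊤ := measure_ne_top α _
  set ν : Measure A := (α Set.univ)⁻¹ • α with hν
  haveI hνprob : IsProbabilityMeasure ν :=
    ⟨by simp [hν, Measure.smul_apply, ENNReal.inv_mul_cancel hθ0 hθtop]⟩
  -- the law of X 1 is ν
  have law1 : Measure.map (X 1) P = ν := by
    have h1 := congrArg (Measure.map (fun a : Fin 1 → A => a 0)) (hX 1)
    rwa [Measure.map_map (measurable_pi_apply 0)
        (measurable_pi_lambda _ fun i => hXmeas _),
      polyaMeasure_one α,
      Measure.map_map (measurable_pi_apply 0)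
        (measurable_pi_lambda (fun (x : A) (_ : Fin 1) => x) fun _ => measurable_id),
      show ((fun a : Fin 1 → A => a 0) ∘ (fun (x : A) (_ : Fin 1) => x)) = id from rfl,
      Measure.map_id,
      show ((fun a : Fin 1 → A => a 0) ∘ (fun ω (i : Fin 1) => X (i + 1) ω)) = X 1 from rfl]
        at h1
  -- the law of X 2 is also ν
  have law2 : Measure.map (X 2) P = ν := by
    have h1 := congrArg (Measure.map (fun a : Fin 2 → A => a 1)) (hX 2)
    rw [Measure.map_map (measurable_pi_apply 1)
        (measurable_pi_lambda _ fun i => hXmeas _),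
      show ((fun a : Fin 2 → A => a 1) ∘ (fun ω (i : Fin 2) => X (i + 1) ω)) = X 2 from rfl,
      polyaMeasure_two α, Measure.map_smul,
      Measure.map_add _ _ (measurable_pi_apply 1),
      Measure.map_map (measurable_pi_apply 1) mvec,
      Measure.map_map (measurable_pi_apply 1) mdiag,
      show ((fun a : Fin 2 → A => a 1) ∘ (fun p : A × A => ![p.1, p.2])) = Prod.snd from by
        funext p; simp,
      show ((fun a : Fin 2 → A => a 1) ∘ (fun x : A => ![x, x])) = id from by
        funext x; simp,
      Measure.map_snd_prod, Measure.map_id] at h1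
    rw [h1]
    have hsmul : ((ν Set.univ) • α : Measure A) = α := by simp
    rw [hsmul]
    ext s _
    simp only [Measure.smul_apply, Measure.add_apply, hν, smul_eq_mul]
    have key : α s + (α Set.univ)⁻¹ * α s =
        (α Set.univ + 1) * ((α Set.univ)⁻¹ * α s) := by
      rw [add_mul, one_mul, ← mul_assoc, ENNReal.mul_inv_cancel hθ0 hθtop, one_mul]
    rw [key, ← mul_assoc,
      ENNReal.inv_mul_cancel (by simp) (ENNReal.add_ne_top.2 ⟨hθtop, by simp⟩), one_mul]
  -- ℒ² facts
  have hν2 : MemLp h 2 ν := by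
    have := (memLp_map_measure_iff hhm.aestronglyMeasurable (hXmeas 1).aemeasurable).2 hh2
    rwa [law1] at this
  have hν2sq : Integrable (fun x => h x ^ 2) ν := hν2.integrable_sq
  have hν1 : Integrable h ν := hν2.integrable one_le_two
  have hα_eq : α = (α Set.univ) • ν := by
    rw [hν, smul_smul, ENNReal.mul_inv_cancel hθ0 hθtop, one_smul]
  have hα1 : Integrable h α := by rw [hα_eq]; exact hν1.smul_measure hθtop
  have hh2' : MemLp (fun ω => h (X 2 ω)) 2 P := by
    refine (memLp_map_measure_iff hhm.aestronglyMeasurable (hXmeas 2).aemeasurable).1 ?_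
    rwa [law2]
  have hintmul : Integrable (fun ω => h (X 1 ω) * h (X 2 ω)) P :=
    integrable_mul_of_memL2 hh2 hh2'
  -- expectations as integrals over ν
  have EX1 : ∫ ω, h (X 1 ω) ∂P = ∫ x, h x ∂ν := by
    have := integral_map (μ := P) (hXmeas 1).aemeasurable hhm.aestronglyMeasurable
    rw [law1] at this; exact this.symm
  have EX1sq : ∫ ω, h (X 1 ω) ^ 2 ∂P = ∫ x, h x ^ 2 ∂ν := by
    have := integral_map (μ := P) (hXmeas 1).aemeasurable
      (f := fun x => h x ^ 2) (hhm.pow_const 2).aestronglyMeasurable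
    rw [law1] at this; exact this.symm
  have Eα1 : ∫ x, h x ∂α = θ * ∫ x, h x ∂ν := by
    rw [hα_eq, integral_smul_measure, hθ, smul_eq_mul]
  have ctoReal : ((α Set.univ + 1)⁻¹ : ℝ≥0∞).toReal = (θ + 1)⁻¹ := by
    rw [ENNReal.toReal_inv, ENNReal.toReal_add hθtop (by simp), ENNReal.toReal_one, hθ]
  have hf2m : Measurable (fun a : Fin 2 → A => h (a 0) * h (a 1)) :=
    (hhm.comp (measurable_pi_apply 0)).mul (hhm.comp (measurable_pi_apply 1))
  -- expectation of h(X1)h(X2)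
  have EXX : ∫ ω, h (X 1 ω) * h (X 2 ω) ∂P =
      (θ + 1)⁻¹ * ((∫ x, h x ∂ν) * (θ * ∫ x, h x ∂ν) + ∫ x, h x ^ 2 ∂ν) := by
    have step1 : ∫ ω, h (X 1 ω) * h (X 2 ω) ∂P =
        ∫ a : Fin 2 → A, h (a 0) * h (a 1) ∂(polyaMeasure α 2) := by
      rw [← hX 2, integral_map (measurable_pi_lambda _ fun i => hXmeas _).aemeasurable
        hf2m.aestronglyMeasurable]
      rfl
    have intM1 : Integrable (fun a : Fin 2 → A => h (a 0) * h (a 1))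
        ((ν.prod α).map (fun p : A × A => ![p.1, p.2])) := by
      refine (integrable_map_measure hf2m.aestronglyMeasurable mvec.aemeasurable).2 ?_
      show Integrable (fun p : A × A => h (![p.1, p.2] 0) * h (![p.1, p.2] 1)) (ν.prod α)
      simpa using hν1.mul_prod hα1
    have intM2 : Integrable (fun a : Fin 2 → A => h (a 0) * h (a 1))
        (ν.map (fun x : A => ![x, x])) := by
      refine (integrable_map_measure hf2m.aestronglyMeasurable mdiag.aemeasurable).2 ?_
      show Integrable (fun x : A => h (![x, x] 0) * h (![x, x] 1)) ν
      simpa [pow_two] using hν2sq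
    rw [step1, polyaMeasure_two α, integral_smul_measure, integral_add_measure intM1 intM2,
      integral_map mvec.aemeasurable hf2m.aestronglyMeasurable,
      integral_map mdiag.aemeasurable hf2m.aestronglyMeasurable]
    simp only [Matrix.cons_val_zero, Matrix.cons_val_one, Matrix.head_cons]
    rw [integral_prod_mul, Eα1, ctoReal, smul_eq_mul,
      show (∫ x, h x * h x ∂ν) = ∫ x, h x ^ 2 ∂ν from by simp [pow_two]]
  -- the de Finetti identities
  have key1 : ∀ ω, (∫ a, h (a 0) ^ 2 ∂(Measure.pi fun _ : Fin 1 => D ω)) =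
      ∫ x, h x ^ 2 ∂(D ω) := by
    intro ω
    haveI := hDprob ω
    exact (measurePreserving_funUnique (D ω) (Fin 1)).integral_comp
      (MeasurableEquiv.funUnique (Fin 1) A).measurableEmbedding (fun x => h x ^ 2)
  have key2 : ∀ ω, (∫ a, h (a 0) * h (a 1) ∂(Measure.pi fun _ : Fin 2 => D ω)) =
      (∫ x, h x ∂(D ω)) ^ 2 := by
    intro ω
    haveI := hDprob ω
    have hcomp := (measurePreserving_finTwoArrow (D ω)).integral_comp
      MeasurableEquiv.finTwoArrow.measurableEmbedding (fun p : A × A => h p.1 * h p.2)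
    rw [integral_prod_mul] at hcomp
    rw [pow_two]
    exact hcomp
  have Ea := hdir 1 (fun a => h (a 0) ^ 2) ((hhm.comp (measurable_pi_apply 0)).pow_const 2)
    (by exact hh2.integrable_sq)
    (by simp only [key1]; exact hint1)
  have Ea' : ∫ ω, (∫ x, h x ^ 2 ∂(D ω)) ∂P = ∫ ω, h (X 1 ω) ^ 2 ∂P := by
    simp only [key1] at Ea; exact Ea
  have Eb := hdir 2 (fun a => h (a 0) * h (a 1)) hf2m
    (by exact hintmul)
    (by simp only [key2]; exact hint2)
  have Eb' : ∫ ω, (∫ x, h x ∂(D ω)) ^ 2 ∂P = ∫ ω, h (X 1 ω) * h (X 2 ω) ∂P := by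
    simp only [key2] at Eb; exact Eb
  -- conclude
  rw [integral_sub hint1 hint2, Ea', Eb', EXX, EX1, EX1sq]
  have hθnn : 0 ≤ θ := hθ ▸ ENNReal.toReal_nonneg
  have hθ1 : θ + 1 ≠ 0 := by linarith
  field_simp
  ring
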